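/- For all nonnegative integers n, m, k with n+m odd, the sum over i+j=k of binom(n,2i)*binom(m,2j) is congruent to binom(n+m,2k) modulo 2. -/

import Mathlib

lemma aux_even_choose (n a : ℕ) (hn : Even n) (ha : Odd a) : 2 ∣ n.choose a := by
  rcases Nat.lt_or_ge n a with hlt | hge
  · simp [Nat.choose_eq_zero_of_lt hlt]
  · obtain ⟨b, rfl⟩ := ha
    have hn0 : n ≠ 0 := by omega
    have key := Nat.add_one_mul_choose_eq (n - 1) (2 * b)
    have hs : (n - 1).succ = n := by omega
    rw [Nat.succ_eq_add_one] at hs; rw [hs] at key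
    -- key : n * (n-1).choose (2*b) = n.choose (2*b+1) * (2*b+1)
    have h2 : 2 ∣ n.choose (2 * b + 1) * (2 * b + 1) := by
      rw [← key]; exact Dvd.dvd.mul_right hn.two_dvd _
    rcases (Nat.Prime.dvd_mul Nat.prime_two).mp h2 with h' | h'
    · exact h'
    · omega

theorem stmt_1 (n m k : ℕ) (h : Odd (n + m)) :
    (∑ p ∈ Finset.HasAntidiagonal.antidiagonal k, n.choose (2 * p.1) * m.choose (2 * p.2)) ≡
      (n + m).choose (2 * k) [MOD 2] := by
  rw [← ZMod.natCast_eq_natCast_iff]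
  rw [Nat.add_choose_eq]
  push_cast
  have hzero : ∀ ij ∈ Finset.HasAntidiagonal.antidiagonal (2 * k),
      ((n.choose ij.1 : ZMod 2) * (m.choose ij.2 : ZMod 2)) ≠ 0 → Even ij.1 := by
    intro ij hij hne
    by_contra hodd
    rw [Nat.not_even_iff_odd] at hodd
    rw [Finset.HasAntidiagonal.mem_antidiagonal] at hij
    have hodd2 : Odd ij.2 := by
      rcases hodd with ⟨c, hc⟩; exact ⟨k - c - 1, by omega⟩
    rcases Nat.even_or_odd n with hne' | hno
    · have := aux_even_choose n ij.1 hne' hodd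
      apply hne
      rw [(ZMod.natCast_eq_zero_iff _ 2).mpr this, zero_mul]
    · have hme : Even m := by
        rcases h with ⟨c, hc⟩; rcases hno with ⟨d, hd⟩; exact ⟨c - d, by omega⟩
      have := aux_even_choose m ij.2 hme hodd2
      apply hne
      rw [(ZMod.natCast_eq_zero_iff _ 2).mpr this, mul_zero]
  rw [← Finset.sum_filter_of_ne hzero]
  apply Finset.sum_nbij' (fun p => (2 * p.1, 2 * p.2)) (fun ij => (ij.1 / 2, ij.2 / 2))
  · intro p hp
    rw [Finset.HasAntidiagonal.mem_antidiagonal] at hp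
    simp only [Finset.mem_filter, Finset.HasAntidiagonal.mem_antidiagonal]
    exact ⟨by omega, ⟨p.1, by ring⟩⟩
  · intro ij hij
    simp only [Finset.mem_filter, Finset.HasAntidiagonal.mem_antidiagonal] at hij
    rw [Finset.HasAntidiagonal.mem_antidiagonal]
    obtain ⟨h1, c, hc⟩ := hij
    omega
  · intro p hp; simp
  · intro ij hij
    simp only [Finset.mem_filter, Finset.HasAntidiagonal.mem_antidiagonal] at hij
    obtain ⟨h1, c, hc⟩ := hij
    have hij2 : Even ij.2 := ⟨k - c, by omega⟩
    obtain ⟨d, hd⟩ := hij2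
    ext <;> simp <;> omega
  · intro p hp; rfl
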